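/- In the two-cell affine OCV-R parallel system with constant applied current I, the branch currents are given explicitly by I_1(t) = −(α/R_tot)·[Δz_0·e^{−t/τ} + κ·(1 − e^{−t/τ})·I] + (R2/R_tot)·I and I_2(t) = +(α/R_tot)·[Δz_0·e^{−t/τ} + κ·(1 − e^{−t/τ})·I] + (R1/R_tot)·I, and the current imbalance is ΔI(t) = I_2(t) − I_1(t) = (2α/R_tot)·Δz(t) − (ΔR/R_tot)·I, where Δz(t) = Δz_0·e^{−t/τ} + κ·(1 − e^{−t/τ})·I. -/

import Mathlib

/-- Explicit branch currents and current imbalance of the two-cell affine OCV-R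
parallel system under constant applied current `I`. -/
theorem stmt4 (Q1 Q2 R1 R2 α β I : ℝ)
    (hQ1 : 0 < Q1) (hQ2 : 0 < Q2) (hR1 : 0 < R1) (hR2 : 0 < R2)
    (hα : 0 < α) (hβ : 0 < β)
    (z1 z2 I1 I2 : ℝ → ℝ)
    (hvolt : ∀ t, (α * z1 t + β) - I1 t * R1 = (α * z2 t + β) - I2 t * R2)
    (hcurr : ∀ t, I1 t + I2 t = I)
    (hz1 : ∀ t, HasDerivAt z1 (-(I1 t) / Q1) t)
    (hz2 : ∀ t, HasDerivAt z2 (-(I2 t) / Q2) t)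
    (τ κ Δz0 : ℝ)
    (hτ : τ = ((R1 + R2) / α) * (Q1 * Q2 / (Q1 + Q2)))
    (hκ : κ = (R2 * Q2 - R1 * Q1) / (α * (Q1 + Q2)))
    (hΔz0 : Δz0 = z2 0 - z1 0) :
    ∀ t, 0 ≤ t →
      I1 t = -(α / (R1 + R2)) *
               (Δz0 * Real.exp (-t / τ) + κ * (1 - Real.exp (-t / τ)) * I)
             + (R2 / (R1 + R2)) * I ∧
      I2 t = (α / (R1 + R2)) *
               (Δz0 * Real.exp (-t / τ) + κ * (1 - Real.exp (-t / τ)) * I)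
             + (R1 / (R1 + R2)) * I ∧
      I2 t - I1 t = (2 * α / (R1 + R2)) *
               (Δz0 * Real.exp (-t / τ) + κ * (1 - Real.exp (-t / τ)) * I)
             - ((R2 - R1) / (R1 + R2)) * I := by
  have hRtot : 0 < R1 + R2 := by linarith
  have hQtot : 0 < Q1 + Q2 := by linarith
  have hτ0 : 0 < τ := by rw [hτ]; positivity
  set w : ℝ → ℝ := fun t => z2 t - z1 t with hwdef
  -- branch currents in terms of w
  have hI1 : ∀ t, I1 t = -(α / (R1 + R2)) * w t + (R2 / (R1 + R2)) * I := by
    intro t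
    have h : I1 t * (R1 + R2) = -α * w t + R2 * I := by
      simp only [hwdef]
      linear_combination -(hvolt t) + R2 * hcurr t
    rw [show I1 t = (-α * w t + R2 * I) / (R1 + R2) from by
      rw [eq_div_iff hRtot.ne']; exact h]
    ring
  have hI2 : ∀ t, I2 t = (α / (R1 + R2)) * w t + (R1 / (R1 + R2)) * I := by
    intro t
    have h : I2 t * (R1 + R2) = α * w t + R1 * I := by
      simp only [hwdef]
      linear_combination hvolt t + R1 * hcurr t
    rw [show I2 t = (α * w t + R1 * I) / (R1 + R2) from by
      rw [eq_div_iff hRtot.ne']; exact h]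
    ring
  -- ODE for w
  have hw' : ∀ t, HasDerivAt w (-(1/τ) * (w t - κ * I)) t := by
    intro t
    have h := (hz2 t).sub (hz1 t)
    have heq : -(I2 t) / Q2 - -(I1 t) / Q1 = -(1/τ) * (w t - κ * I) := by
      rw [hI1 t, hI2 t, hτ, hκ]
      field_simp
      ring
    exact heq ▸ h
  -- auxiliary constant function
  set g : ℝ → ℝ := fun t => (w t - κ * I) * Real.exp (t / τ) with hgdef
  have hg' : ∀ t, HasDerivAt g 0 t := by
    intro t
    have hexp : HasDerivAt (fun t : ℝ => Real.exp (t / τ))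
        (Real.exp (t / τ) * (1 / τ)) t := by
      have := ((hasDerivAt_id t).div_const τ).exp
      simpa [div_eq_mul_inv, mul_comm] using this
    have := ((hw' t).sub_const (κ * I)).mul hexp
    refine this.congr_deriv ?_
    ring
  have hconst : ∀ t, g t = g 0 := fun t =>
    is_const_of_deriv_eq_zero (fun x => (hg' x).differentiableAt)
      (fun x => (hg' x).deriv) t 0
  have hw0 : w 0 = Δz0 := by rw [hΔz0]
  intro t _
  have hgt := hconst t
  have hexp_ne : Real.exp (t / τ) ≠ 0 := Real.exp_ne_zero _
  have hwt : w t = Δz0 * Real.exp (-t / τ) + κ * (1 - Real.exp (-t / τ)) * I := by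
    have h0 : g 0 = Δz0 - κ * I := by
      simp [hgdef, hw0]
    rw [h0] at hgt
    have : w t - κ * I = (Δz0 - κ * I) * Real.exp (-t / τ) := by
      have hinv : Real.exp (-t / τ) = (Real.exp (t / τ))⁻¹ := by
        rw [← Real.exp_neg]; ring_nf
      rw [hinv, eq_comm, mul_inv_eq_iff_eq_mul₀ hexp_ne]
      simpa [hgdef, mul_comm] using hgt.symm
    linarith [this, mul_sub (Real.exp (-t / τ)) Δz0 (κ * I)]
  refine ⟨?_, ?_, ?_⟩
  · rw [hI1 t, hwt]
  · rw [hI2 t, hwt]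
  · rw [hI1 t, hI2 t, hwt]; field_simp; ring
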